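/- Let P ⊆ ℝ^d be a full-dimensional lattice polytope with codegree a satisfying P = ⌊aP⌋ + {P}. Then there exists an integer K ≥ 1 (depending on P) such that for all integers k ≥ K, the dilated polytope kP is nearly Gorenstein. -/

import Mathlib

open Set Pointwise

/-- The set of lattice points of `ℝ^d`. -/
def latticePoints (d : ℕ) : Set (Fin d → ℝ) :=
  {x | ∀ i, ∃ z : ℤ, x i = (z : ℝ)}

/-- A lattice polytope: the convex hull of a finite set of lattice points. -/
def IsLatticePolytope {d : ℕ} (P : Set (Fin d → ℝ)) : Prop :=
  ∃ V : Finset (Fin d → ℝ), (V : Set (Fin d → ℝ)) ⊆ latticePoints d ∧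
    P = convexHull ℝ (V : Set (Fin d → ℝ))

/-- The natural pairing of an integral linear functional with a point of `ℝ^d`. -/
def pairing {d : ℕ} (n : Fin d → ℤ) (x : Fin d → ℝ) : ℝ :=
  ∑ i, (n i : ℝ) * x i

/-- `P = {x | n_F(x) ≥ -h_F}` is an irredundant presentation with primitive
integral inner normals, i.e. the facet presentation of `P`. -/
def IsFacetPresentation {d m : ℕ} (P : Set (Fin d → ℝ))
    (n : Fin m → Fin d → ℤ) (h : Fin m → ℤ) : Prop :=
  P = {x | ∀ i, pairing (n i) x ≥ -(h i : ℝ)} ∧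
  (∀ i, Finset.univ.gcd (n i) = 1) ∧
  (∀ i, ∃ x : Fin d → ℝ, pairing (n i) x < -(h i : ℝ) ∧
    ∀ j, j ≠ i → pairing (n j) x ≥ -(h j : ℝ))

/-- `a` is the codegree of `P`: the least `k ≥ 1` such that `int(kP)` contains
a lattice point. -/
def IsCodegree {d : ℕ} (P : Set (Fin d → ℝ)) (a : ℕ) : Prop :=
  1 ≤ a ∧ (interior ((a : ℝ) • P) ∩ latticePoints d).Nonempty ∧
    ∀ k : ℕ, 1 ≤ k → (interior ((k : ℝ) • P) ∩ latticePoints d).Nonempty → a ≤ k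

/-- The floor polytope `⌊R⌋ = conv(int(R) ∩ ℤ^d)`. -/
def floorPoly {d : ℕ} (R : Set (Fin d → ℝ)) : Set (Fin d → ℝ) :=
  convexHull ℝ (interior R ∩ latticePoints d)

/-- The remainder polytope `{P} = conv{x ∈ ℤ^d | n_F(x) ≥ (a-1)h_F - 1}`,
defined in terms of the facet presentation data and the codegree `a`. -/
def remPoly {d m : ℕ} (n : Fin m → Fin d → ℤ) (h : Fin m → ℤ) (a : ℕ) :
    Set (Fin d → ℝ) :=
  convexHull ℝ {x | x ∈ latticePoints d ∧
    ∀ i, pairing (n i) x ≥ ((a : ℝ) - 1) * (h i : ℝ) - 1}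

/-- The cone `C_P ⊆ ℝ^d × ℝ` over `P`, in terms of the facet presentation. -/
def coneOver {d m : ℕ} (n : Fin m → Fin d → ℤ) (h : Fin m → ℤ) :
    Set ((Fin d → ℝ) × ℝ) :=
  {p | ∀ i, pairing (n i) p.1 ≥ -(p.2 * (h i : ℝ))}

/-- The interior `int(C_P)` of the cone over `P`. -/
def intCone {d m : ℕ} (n : Fin m → Fin d → ℤ) (h : Fin m → ℤ) :
    Set ((Fin d → ℝ) × ℝ) :=
  {p | ∀ i, pairing (n i) p.1 > -(p.2 * (h i : ℝ))}

/-- The anticanonical set `ant(C_P)` of the cone over `P`. -/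
def antCone {d m : ℕ} (n : Fin m → Fin d → ℤ) (h : Fin m → ℤ) :
    Set ((Fin d → ℝ) × ℝ) :=
  {p | ∀ i, pairing (n i) p.1 ≥ -(p.2 * (h i : ℝ)) - 1}

/-- Lattice points of `ℝ^d × ℝ = ℝ^{d+1}`. -/
def latticePairs (d : ℕ) : Set ((Fin d → ℝ) × ℝ) :=
  {p | p.1 ∈ latticePoints d ∧ ∃ z : ℤ, p.2 = (z : ℝ)}

/-- The nearly Gorenstein condition with respect to a given facet presentation:
`(C_P ∩ ℤ^{d+1}) \ {0} ⊆ (int(C_P) ∩ ℤ^{d+1}) + (ant(C_P) ∩ ℤ^{d+1})`. -/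
def NGIncl {d m : ℕ} (n : Fin m → Fin d → ℤ) (h : Fin m → ℤ) : Prop :=
  (coneOver n h ∩ latticePairs d) \ {(0 : (Fin d → ℝ) × ℝ)} ⊆
    (intCone n h ∩ latticePairs d) + (antCone n h ∩ latticePairs d)

/-- A full-dimensional lattice polytope is nearly Gorenstein if the nearly
Gorenstein inclusion holds for its facet presentation. -/
def NearlyGorenstein {d : ℕ} (P : Set (Fin d → ℝ)) : Prop :=
  ∃ (m : ℕ) (n : Fin m → Fin d → ℤ) (h : Fin m → ℤ),
    IsFacetPresentation P n h ∧ NGIncl n h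

/-- The polar dual `Q* = {y | y(x) ≥ -1 for all x ∈ Q}`. -/
def polarDual {d : ℕ} (Q : Set (Fin d → ℝ)) : Set (Fin d → ℝ) :=
  {y | ∀ x ∈ Q, (∑ i, y i * x i) ≥ -1}

/-- A reflexive polytope: a lattice polytope with `0` in its interior whose
polar dual is again a lattice polytope. -/
def IsReflexive {d : ℕ} (Q : Set (Fin d → ℝ)) : Prop :=
  IsLatticePolytope Q ∧ (0 : Fin d → ℝ) ∈ interior Q ∧
    IsLatticePolytope (polarDual Q)

/-- A Gorenstein polytope: some dilate `kP`, translated by a lattice vector,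
is reflexive. -/
def IsGorenstein {d : ℕ} (P : Set (Fin d → ℝ)) : Prop :=
  ∃ (k : ℕ) (w : Fin d → ℝ), 1 ≤ k ∧ w ∈ latticePoints d ∧
    IsReflexive ((fun x => x - w) '' ((k : ℝ) • P))

/-- The integer decomposition property. -/
def IsIDP {d : ℕ} (P : Set (Fin d → ℝ)) : Prop :=
  ∀ k : ℕ, 1 ≤ k → ∀ x ∈ ((k : ℝ) • P) ∩ latticePoints d,
    ∃ y : Fin k → Fin d → ℝ, (∀ j, y j ∈ P ∩ latticePoints d) ∧ x = ∑ j, y j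

/-- Minkowski indecomposability of a lattice polytope. -/
def IsIndecomposable {d : ℕ} (P : Set (Fin d → ℝ)) : Prop :=
  (¬ ∃ p : Fin d → ℝ, P = {p}) ∧
  ∀ P₁ P₂ : Set (Fin d → ℝ), IsLatticePolytope P₁ → IsLatticePolytope P₂ →
    P = P₁ + P₂ → (∃ p, P₁ = {p}) ∨ (∃ p, P₂ = {p})

/-- A `(0,1)`-polytope: the convex hull of a set of `(0,1)`-vectors. -/
def Is01Polytope {d : ℕ} (P : Set (Fin d → ℝ)) : Prop :=
  ∃ V : Finset (Fin d → ℝ), (∀ v ∈ V, ∀ i, v i = 0 ∨ v i = 1) ∧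
    P = convexHull ℝ (V : Set (Fin d → ℝ))


section AuxLemmas

lemma pairing_add' {d : ℕ} (n : Fin d → ℤ) (x y : Fin d → ℝ) :
    pairing n (x + y) = pairing n x + pairing n y := by
  simp [pairing, mul_add, Finset.sum_add_distrib]

lemma pairing_smul' {d : ℕ} (n : Fin d → ℤ) (c : ℝ) (x : Fin d → ℝ) :
    pairing n (c • x) = c * pairing n x := by
  simp [pairing, Finset.mul_sum]; ring_nf
  exact Finset.sum_congr rfl (fun i _ => by ring)

lemma pairing_sub' {d : ℕ} (n : Fin d → ℤ) (x y : Fin d → ℝ) :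
    pairing n (x - y) = pairing n x - pairing n y := by
  simp [pairing, mul_sub, Finset.sum_sub_distrib]

lemma pairing_sum' {d : ℕ} (n : Fin d → ℤ) {ι : Type*} (t : Finset ι) (v : ι → Fin d → ℝ) :
    pairing n (∑ j ∈ t, v j) = ∑ j ∈ t, pairing n (v j) := by
  classical
  induction t using Finset.induction with
  | empty => simp [pairing]
  | insert _ s h ih => simp [Finset.sum_insert h, pairing_add', ih]

lemma pairing_int' {d : ℕ} (n : Fin d → ℤ) {x : Fin d → ℝ} (hx : x ∈ latticePoints d) :
    ∃ Z : ℤ, pairing n x = (Z : ℝ) := by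
  classical
  choose zc hzc using hx
  refine ⟨∑ j, n j * zc j, ?_⟩
  unfold pairing
  push_cast
  exact Finset.sum_congr rfl (fun j _ => by rw [hzc j])

lemma lattice_add' {d : ℕ} {x y : Fin d → ℝ} (hx : x ∈ latticePoints d)
    (hy : y ∈ latticePoints d) : x + y ∈ latticePoints d := by
  intro i
  obtain ⟨zx, hzx⟩ := hx i
  obtain ⟨zy, hzy⟩ := hy i
  exact ⟨zx + zy, by simp [hzx, hzy]⟩

lemma lattice_sub' {d : ℕ} {x y : Fin d → ℝ} (hx : x ∈ latticePoints d)
    (hy : y ∈ latticePoints d) : x - y ∈ latticePoints d := by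
  intro i
  obtain ⟨zx, hzx⟩ := hx i
  obtain ⟨zy, hzy⟩ := hy i
  exact ⟨zx - zy, by simp [hzx, hzy]⟩

lemma lattice_zsmul' {d : ℕ} (c : ℤ) {x : Fin d → ℝ} (hx : x ∈ latticePoints d) :
    (c : ℝ) • x ∈ latticePoints d := by
  intro i
  obtain ⟨zx, hzx⟩ := hx i
  exact ⟨c * zx, by simp [hzx]⟩

/-- extraction of a tight generator from a convex hull -/
lemma extract' {d m : ℕ} (n : Fin m → Fin d → ℤ) (S : Set (Fin d → ℝ)) (c : Fin m → ℝ)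
    (hS : ∀ s ∈ S, ∀ i, c i ≤ pairing (n i) s) {z : Fin d → ℝ}
    (hz : z ∈ convexHull ℝ S) (T : Finset (Fin m))
    (hT : ∀ i ∈ T, pairing (n i) z ≤ c i) :
    ∃ s ∈ S, ∀ i ∈ T, pairing (n i) s = c i := by
  rw [convexHull_eq] at hz
  obtain ⟨ι, t, w, zf, hw0, hw1, hzS, hcm⟩ := hz
  have hzsum : z = ∑ j ∈ t, w j • zf j := by
    rw [← hcm, Finset.centerMass_eq_of_sum_1 _ _ hw1]
  have hpair : ∀ i, pairing (n i) z = ∑ j ∈ t, w j * pairing (n i) (zf j) := by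
    intro i
    rw [hzsum, pairing_sum']
    exact Finset.sum_congr rfl (fun j _ => pairing_smul' _ _ _)
  have hex : ∃ j₀ ∈ t, 0 < w j₀ := by
    by_contra hcon
    push_neg at hcon
    have : ∑ j ∈ t, w j = 0 :=
      Finset.sum_eq_zero (fun j hj => le_antisymm (hcon j hj) (hw0 j hj))
    rw [hw1] at this; norm_num at this
  obtain ⟨j₀, hj₀, hwj₀⟩ := hex
  refine ⟨zf j₀, hzS j₀ hj₀, fun i hi => ?_⟩
  have hlow := hS _ (hzS j₀ hj₀) i
  have hkey : w j₀ * (pairing (n i) (zf j₀) - c i) ≤ 0 := by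
    have h1 : ∑ j ∈ t, w j * (pairing (n i) (zf j) - c i) = pairing (n i) z - c i := by
      have e1 : ∑ j ∈ t, w j * (pairing (n i) (zf j) - c i)
          = (∑ j ∈ t, w j * pairing (n i) (zf j)) - (∑ j ∈ t, w j) * c i := by
        rw [Finset.sum_mul, ← Finset.sum_sub_distrib]
        exact Finset.sum_congr rfl (fun j _ => by ring)
      rw [e1, hw1, one_mul, ← hpair i]
    have h2 : w j₀ * (pairing (n i) (zf j₀) - c i) ≤
        ∑ j ∈ t, w j * (pairing (n i) (zf j) - c i) := by
      apply Finset.single_le_sum (f := fun j => w j * (pairing (n i) (zf j) - c i)) ?_ hj₀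
      intro j hj
      exact mul_nonneg (hw0 j hj) (sub_nonneg.2 (hS _ (hzS j hj) i))
    have h3 : pairing (n i) z - c i ≤ 0 := sub_nonpos.2 (hT i hi)
    linarith
  have h4 : pairing (n i) (zf j₀) - c i ≤ 0 := by
    by_contra hpos
    push_neg at hpos
    nlinarith
  linarith

/-- convexity of an intersection of halfspaces -/
lemma convex_halfspaces' {d m : ℕ} (n : Fin m → Fin d → ℤ) (c : Fin m → ℝ) :
    Convex ℝ {x : Fin d → ℝ | ∀ i, c i ≤ pairing (n i) x} := by
  intro x hx y hy s t hs ht hst i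
  have : pairing (n i) (s • x + t • y) = s * pairing (n i) x + t * pairing (n i) y := by
    rw [pairing_add', pairing_smul', pairing_smul']
  rw [this]
  calc c i = s * c i + t * c i := by rw [← add_mul, hst, one_mul]
    _ ≤ s * pairing (n i) x + t * pairing (n i) y := by
        gcongr <;> [exact hx i; exact hy i]

/-- scaling a halfspace presentation -/
lemma smul_halfspaces' {d m : ℕ} (n : Fin m → Fin d → ℤ) (c : Fin m → ℝ) {r : ℝ} (hr : 0 < r) :
    r • {x : Fin d → ℝ | ∀ i, c i ≤ pairing (n i) x}
      = {x : Fin d → ℝ | ∀ i, r * c i ≤ pairing (n i) x} := by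
  ext x
  rw [mem_smul_set_iff_inv_smul_mem₀ (ne_of_gt hr)]
  simp only [mem_setOf_eq]
  constructor
  · intro hx i
    have := hx i
    rw [pairing_smul'] at this
    have h2 := mul_le_mul_of_nonneg_left this (le_of_lt hr)
    rwa [← mul_assoc, mul_inv_cancel₀ (ne_of_gt hr), one_mul] at h2
  · intro hx i
    rw [pairing_smul']
    have h2 := mul_le_mul_of_nonneg_left (hx i) (le_of_lt (inv_pos.2 hr))
    rwa [← mul_assoc, inv_mul_cancel₀ (ne_of_gt hr), one_mul] at h2

/-- interior points satisfy strict inequalities -/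
lemma interior_strict' {d m : ℕ} (n : Fin m → Fin d → ℤ) (c : Fin m → ℝ)
    (hprim : ∀ i, Finset.univ.gcd (n i) = 1)
    {y : Fin d → ℝ} (hy : y ∈ interior {x : Fin d → ℝ | ∀ i, c i ≤ pairing (n i) x})
    (i : Fin m) : c i < pairing (n i) y := by
  obtain ⟨t, hts, hto, hyt⟩ := mem_interior.1 hy
  obtain ⟨ρ, hρ, hball⟩ := Metric.isOpen_iff.1 hto y hyt
  by_contra hcon
  push_neg at hcon
  have heq : pairing (n i) y = c i := le_antisymm hcon ((hts hyt) i)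
  have hne : n i ≠ 0 := by
    intro h0
    have h1 : Finset.univ.gcd (n i) = 0 :=
      Finset.gcd_eq_zero_iff.2 (fun j _ => by rw [h0]; rfl)
    rw [hprim i] at h1
    norm_num at h1
  set nv : Fin d → ℝ := fun j => ((n i j : ℤ) : ℝ) with hnv
  have hsq : 0 < pairing (n i) nv := by
    have : pairing (n i) nv = ∑ j, ((n i j : ℝ))^2 := by
      unfold nv; unfold pairing; exact Finset.sum_congr rfl (fun j _ => by ring)
    rw [this]
    obtain ⟨j, hj⟩ : ∃ j, n i j ≠ 0 := by
      by_contra hall; push_neg at hall; exact hne (funext hall)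
    apply Finset.sum_pos' (fun k _ => sq_nonneg _) ⟨j, Finset.mem_univ j, ?_⟩
    have : ((n i j : ℝ)) ≠ 0 := Int.cast_ne_zero.2 hj
    positivity
  set s : ℝ := ρ / (2 * (‖nv‖ + 1)) with hs
  have hspos : 0 < s := by positivity
  have hmem : y - s • nv ∈ Metric.ball y ρ := by
    rw [Metric.mem_ball, dist_eq_norm]
    have : y - s • nv - y = -(s • nv) := by abel
    rw [this, norm_neg, norm_smul, Real.norm_eq_abs, abs_of_pos hspos]
    have h2 : s * ‖nv‖ ≤ s * (‖nv‖+1) := by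
      apply mul_le_mul_of_nonneg_left (by linarith [norm_nonneg nv]) (le_of_lt hspos)
    have h3 : s * (‖nv‖ + 1) = ρ / 2 := by
      rw [hs]; field_simp
    linarith
  have hmem2 := hts (hball hmem)
  have := hmem2 i
  rw [show y - s • nv = y + (-s) • nv by rw [neg_smul]; abel, pairing_add', pairing_smul',
    heq] at this
  nlinarith

/-- recession vector of a bounded halfspace-presented set is zero -/
lemma recession_zero' {d m : ℕ} (n : Fin m → Fin d → ℤ) (c : Fin m → ℝ)
    {B : Set (Fin d → ℝ)} (hB : Bornology.IsBounded B)
    (hBeq : B = {x | ∀ i, c i ≤ pairing (n i) x})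
    {p₀ : Fin d → ℝ} (hp₀ : p₀ ∈ B)
    {u : Fin d → ℝ} (hu : ∀ i, 0 ≤ pairing (n i) u) : u = 0 := by
  by_contra hune
  have hnu : 0 < ‖u‖ := norm_pos_iff.2 hune
  obtain ⟨C, hC⟩ := hB.exists_norm_le
  have hmem : ∀ t : ℝ, 0 ≤ t → p₀ + t • u ∈ B := by
    intro t ht
    rw [hBeq]
    intro i
    rw [pairing_add', pairing_smul']
    have h1 : c i ≤ pairing (n i) p₀ := by rw [hBeq] at hp₀; exact hp₀ i
    nlinarith [hu i]
  set t : ℝ := (C + ‖p₀‖ + 1) / ‖u‖ with hts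
  have hCpos : 0 ≤ C := le_trans (norm_nonneg p₀) (hC p₀ hp₀)
  have htpos : 0 ≤ t := by positivity
  have h2 := hC _ (hmem t htpos)
  have h3 : t * ‖u‖ ≤ ‖p₀ + t • u‖ + ‖p₀‖ := by
    have h5 := norm_sub_le (p₀ + t • u) p₀
    have heq : p₀ + t • u - p₀ = t • u := by abel
    rw [heq, norm_smul, Real.norm_eq_abs, abs_of_nonneg htpos] at h5
    exact h5
  have h4 : t * ‖u‖ = C + ‖p₀‖ + 1 := by
    rw [hts]; field_simp
  linarith

/-- two distinct points in a set with nonempty interior -/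
lemma two_points' {d : ℕ} (hd : 1 ≤ d) {P : Set (Fin d → ℝ)}
    (hfull : (interior P).Nonempty) :
    ∃ p₀ p₁ : Fin d → ℝ, p₀ ∈ P ∧ p₁ ∈ P ∧ p₀ ≠ p₁ := by
  obtain ⟨y, hy⟩ := hfull
  obtain ⟨t, hts, hto, hyt⟩ := mem_interior.1 hy
  obtain ⟨ρ, hρ, hball⟩ := Metric.isOpen_iff.1 hto y hyt
  have : Nonempty (Fin d) := ⟨⟨0, hd⟩⟩
  set e : Fin d → ℝ := fun _ => 1 with he
  refine ⟨y, y + (ρ/2) • e, interior_subset hy, ?_, ?_⟩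
  · apply hts; apply hball
    rw [Metric.mem_ball, dist_eq_norm]
    have h1 : y + (ρ/2) • e - y = (ρ/2) • e := by abel
    rw [h1, norm_smul, Real.norm_eq_abs, abs_of_pos (by linarith)]
    have hne : ‖e‖ = 1 := by
      rw [he]
      have h2 : (fun _ : Fin d => (1:ℝ)) = (1 : Fin d → ℝ) := rfl
      rw [h2, norm_one]
    rw [hne, mul_one]; linarith
  · intro hcontra
    have := congrFun hcontra ⟨0, hd⟩
    simp [he] at this
    linarith

end AuxLemmas

set_option maxHeartbeats 2000000 in
theorem stmt_11 {d : ℕ} (hd : 1 ≤ d) (P : Set (Fin d → ℝ))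
    (hP : IsLatticePolytope P) (hfull : (interior P).Nonempty)
    {m : ℕ} (n : Fin m → Fin d → ℤ) (h : Fin m → ℤ)
    (hpres : IsFacetPresentation P n h)
    (a : ℕ) (ha : IsCodegree P a)
    (hdecomp : P = floorPoly ((a : ℝ) • P) + remPoly n h a) :
    ∃ K : ℕ, 1 ≤ K ∧ ∀ k : ℕ, K ≤ k → NearlyGorenstein ((k : ℝ) • P) := by
  classical
  obtain ⟨V, hVlat, hPV⟩ := hP
  obtain ⟨hPeq, hgcd, hirr⟩ := hpres
  obtain ⟨ha1, -, -⟩ := ha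
  -- halfspace form of P
  have hPle : P = {x : Fin d → ℝ | ∀ i, -(h i : ℝ) ≤ pairing (n i) x} := hPeq
  have hPcompact : IsCompact P := by
    rw [hPV]; exact (V.finite_toSet).isCompact_convexHull ℝ
  have hPbounded : Bornology.IsBounded P := hPcompact.isBounded
  have hPne : P.Nonempty := hfull.mono interior_subset
  obtain ⟨p₀, p₁, hp₀, hp₁, hp01⟩ := two_points' hd hfull
  -- m must be positive
  have hm : 0 < m := by
    rcases Nat.eq_zero_or_pos m with hm0 | hm
    · exfalso
      subst hm0
      have hPuniv : P = univ := by
        rw [hPle]; ext x; simp [Fin.isEmpty]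
      obtain ⟨C, hC⟩ := hPbounded.exists_norm_le
      have hCpos : 0 ≤ C := le_trans (norm_nonneg p₀) (hC p₀ hp₀)
      have : Nonempty (Fin d) := ⟨⟨0, hd⟩⟩
      have h1 := hC ((C+1) • (1 : Fin d → ℝ)) (by rw [hPuniv]; trivial)
      rw [norm_smul, norm_one, mul_one, Real.norm_eq_abs, abs_of_nonneg (by linarith)] at h1
      linarith
    · exact hm
  have haR : (0:ℝ) < (a:ℝ) := by exact_mod_cast ha1
  have haR1 : (1:ℝ) ≤ (a:ℝ) := by exact_mod_cast ha1
  -- Step A : tight point on T gives good lattice data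
  have hGood : ∀ T : Finset (Fin m), ∀ z ∈ P, (∀ i ∈ T, pairing (n i) z + (h i : ℝ) ≤ 0) →
      ∃ v w : Fin d → ℝ, v ∈ latticePoints d ∧ w ∈ latticePoints d ∧
        (∀ i, -(h i : ℝ) ≤ pairing (n i) v) ∧
        (∀ i, ((a:ℝ) - 1) * (h i : ℝ) - 1 ≤ pairing (n i) w) ∧
        (∀ i ∈ T, pairing (n i) v = -(h i : ℝ)) ∧
        (∀ i ∈ T, pairing (n i) w = ((a:ℝ) - 1) * (h i : ℝ) - 1) := by
    intro T z hz hzT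
    have hVP : (V : Set (Fin d → ℝ)) ⊆ P := by
      rw [hPV]; exact subset_convexHull ℝ _
    have hVlow : ∀ s ∈ (V : Set (Fin d → ℝ)), ∀ i, -(h i : ℝ) ≤ pairing (n i) s := by
      intro s hs i
      have := hVP hs
      rw [hPle] at this
      exact this i
    obtain ⟨v, hvV, hvT⟩ := extract' n (V : Set (Fin d → ℝ)) (fun i => -(h i : ℝ)) hVlow
      (by rw [← hPV]; exact hz) T (fun i hi => by have h2 := hzT i hi; show pairing (n i) z ≤ -(h i:ℝ); linarith)
    -- decompose z via hdecomp
    have hz2 : z ∈ floorPoly ((a : ℝ) • P) + remPoly n h a := by rw [← hdecomp]; exact hz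
    rw [Set.mem_add] at hz2
    obtain ⟨f, hf, r, hr, hfr⟩ := hz2
    -- lower bounds for floor part
    have haP : (a : ℝ) • P = {x : Fin d → ℝ | ∀ i, (a:ℝ) * (-(h i : ℝ)) ≤ pairing (n i) x} := by
      rw [hPle]; exact smul_halfspaces' n _ haR
    have hfloor : ∀ i, 1 - (a:ℝ) * (h i : ℝ) ≤ pairing (n i) f := by
      have hsub : interior ((a : ℝ) • P) ∩ latticePoints d ⊆
          {x : Fin d → ℝ | ∀ i, 1 - (a:ℝ) * (h i : ℝ) ≤ pairing (n i) x} := by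
        rintro y ⟨hyint, hylat⟩ i
        have hstrict : (a:ℝ) * (-(h i : ℝ)) < pairing (n i) y := by
          apply interior_strict' n _ hgcd _ i
          rw [← haP]; exact hyint
        obtain ⟨Z, hZ⟩ := pairing_int' (n i) hylat
        have hZlt : -((a : ℤ) * h i) < Z := by
          have : ((-((a:ℤ) * h i) : ℤ) : ℝ) < (Z : ℝ) := by push_cast; nlinarith
          exact_mod_cast this
        have hZge : -((a:ℤ) * h i) + 1 ≤ Z := hZlt
        have : ((-((a:ℤ) * h i) + 1 : ℤ) : ℝ) ≤ (Z : ℝ) := by exact_mod_cast hZge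
        rw [hZ]; push_cast at this ⊢; linarith
      have := convexHull_min hsub (convex_halfspaces' n _) hf
      exact this
    -- lower bounds for remainder part
    have hremS : {x : Fin d → ℝ | x ∈ latticePoints d ∧
        ∀ i, pairing (n i) x ≥ ((a:ℝ) - 1) * (h i : ℝ) - 1} ⊆
        {x : Fin d → ℝ | ∀ i, ((a:ℝ) - 1) * (h i : ℝ) - 1 ≤ pairing (n i) x} :=
      fun x hx i => hx.2 i
    have hrem : ∀ i, ((a:ℝ) - 1) * (h i : ℝ) - 1 ≤ pairing (n i) r :=
      convexHull_min hremS (convex_halfspaces' n _) hr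
    -- tightness of r on T
    have hrT : ∀ i ∈ T, pairing (n i) r ≤ ((a:ℝ) - 1) * (h i : ℝ) - 1 := by
      intro i hi
      have h1 : pairing (n i) z = pairing (n i) f + pairing (n i) r := by
        rw [← hfr, pairing_add']
      have h2 := hzT i hi
      have h3 := hfloor i
      linarith
    obtain ⟨w, hwS, hwT⟩ := extract' n _ (fun i => ((a:ℝ) - 1) * (h i : ℝ) - 1)
      (fun s hs i => hs.2 i) hr T hrT
    exact ⟨v, w, hVlat hvV, hwS.1, hVlow v hvV, fun i => hwS.2 i, hvT, hwT⟩
  -- Step B : uniform epsilon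
  have hEps : ∃ ε : ℝ, 0 < ε ∧ ∀ T : Finset (Fin m), ∀ z ∈ P,
      (∀ i ∈ T, pairing (n i) z + (h i : ℝ) < ε) →
      ∃ z' ∈ P, ∀ i ∈ T, pairing (n i) z' + (h i : ℝ) ≤ 0 := by
    have hper : ∀ T : Finset (Fin m), ∃ e : ℝ, 0 < e ∧ ∀ z ∈ P,
        (∀ i ∈ T, pairing (n i) z + (h i : ℝ) < e) →
        ∃ z' ∈ P, ∀ i ∈ T, pairing (n i) z' + (h i : ℝ) ≤ 0 := by
      intro T
      by_cases hex : ∃ z' ∈ P, ∀ i ∈ T, pairing (n i) z' + (h i : ℝ) ≤ 0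
      · exact ⟨1, one_pos, fun z _ _ => hex⟩
      · have hTne : T.Nonempty := by
          rcases Finset.eq_empty_or_nonempty T with hT0 | hTne
          · exact absurd ⟨p₀, hp₀, by simp [hT0]⟩ hex
          · exact hTne
        set F : (Fin d → ℝ) → ℝ := fun z => ∑ i ∈ T, (pairing (n i) z + (h i : ℝ)) with hF
        have hFcont : ContinuousOn F P := by
          apply Continuous.continuousOn
          apply continuous_finset_sum
          intro i _
          apply Continuous.add ?_ continuous_const
          unfold pairing
          apply continuous_finset_sum
          intro j _
          exact continuous_const.mul (continuous_apply j)
        obtain ⟨z₀, hz₀P, hz₀min⟩ := hPcompact.exists_isMinOn hPne hFcont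
        have hFnonneg : ∀ z ∈ P, ∀ i ∈ T, 0 ≤ pairing (n i) z + (h i : ℝ) := by
          intro z hz i _
          have : -(h i:ℝ) ≤ pairing (n i) z := by rw [hPle] at hz; exact hz i
          linarith
        have hFpos : 0 < F z₀ := by
          rcases lt_or_ge 0 (F z₀) with h1 | h1
          · exact h1
          · exfalso
            have hz0 : F z₀ = 0 := le_antisymm h1
              (Finset.sum_nonneg (fun i hi => hFnonneg z₀ hz₀P i hi))
            have hall := (Finset.sum_eq_zero_iff_of_nonneg
              (fun i hi => hFnonneg z₀ hz₀P i hi)).1 hz0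
            exact hex ⟨z₀, hz₀P, fun i hi => le_of_eq (hall i hi)⟩
        refine ⟨F z₀ / m, by positivity, fun z hz hsmall => ?_⟩
        exfalso
        have h1 : F z < T.card * (F z₀ / m) := by
          rw [hF]
          calc ∑ i ∈ T, (pairing (n i) z + (h i : ℝ))
              < ∑ _i ∈ T, (F z₀ / m) := Finset.sum_lt_sum_of_nonempty hTne hsmall
            _ = T.card * (F z₀ / m) := by rw [Finset.sum_const, nsmul_eq_mul]
        have h2 : (T.card : ℝ) ≤ m := by
          have h6 := Finset.card_le_univ T
          simp only [Finset.card_univ, Fintype.card_fin] at h6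
          exact_mod_cast h6
        have h3 : (T.card : ℝ) * (F z₀ / m) ≤ m * (F z₀ / m) := by
          apply mul_le_mul_of_nonneg_right h2 (by positivity)
        have h4 : (m:ℝ) * (F z₀ / m) = F z₀ := by
          field_simp
        have h5 := hz₀min hz
        simp only [Set.mem_setOf_eq] at h5
        have : F z₀ ≤ F z := h5
        linarith
    choose e he1 he2 using hper
    refine ⟨(Finset.univ.powerset.inf' (Finset.powerset_nonempty _) e), ?_, ?_⟩
    · rw [Finset.lt_inf'_iff]
      exact fun T _ => he1 T
    · intro T z hz hsmall
      apply he2 T z hz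
      intro i hi
      calc pairing (n i) z + (h i : ℝ) < Finset.univ.powerset.inf' ⟨∅, by simp⟩ e :=
            hsmall i hi
        _ ≤ e T := Finset.inf'_le e (Finset.mem_powerset.2 (Finset.subset_univ T))

  obtain ⟨ε, hε, hEps⟩ := hEps
  -- per-T choice of good data
  have hChoice : ∀ T : Finset (Fin m), ∃ vw : (Fin d → ℝ) × (Fin d → ℝ),
      (∃ z ∈ P, ∀ i ∈ T, pairing (n i) z + (h i : ℝ) < ε) →
      (vw.1 ∈ latticePoints d ∧ vw.2 ∈ latticePoints d ∧
        (∀ i, -(h i : ℝ) ≤ pairing (n i) vw.1) ∧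
        (∀ i, ((a:ℝ) - 1) * (h i : ℝ) - 1 ≤ pairing (n i) vw.2) ∧
        (∀ i ∈ T, pairing (n i) vw.1 = -(h i : ℝ)) ∧
        (∀ i ∈ T, pairing (n i) vw.2 = ((a:ℝ) - 1) * (h i : ℝ) - 1)) := by
    intro T
    by_cases hpre : ∃ z ∈ P, ∀ i ∈ T, pairing (n i) z + (h i : ℝ) < ε
    · obtain ⟨z, hz, hzs⟩ := hpre
      obtain ⟨z', hz', hz'T⟩ := hEps T z hz hzs
      obtain ⟨v, w, c1, c2, c3, c4, c5, c6⟩ := hGood T z' hz' hz'T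
      exact ⟨(v, w), fun _ => ⟨c1, c2, c3, c4, c5, c6⟩⟩
    · exact ⟨(0, 0), fun hp => absurd hp hpre⟩
  choose VW hVW using hChoice
  have hFinNe : (((Finset.univ : Finset (Finset (Fin m)))) ×ˢ (Finset.univ : Finset (Fin m))).Nonempty :=
    ⟨(∅, ⟨0, hm⟩), by simp⟩
  set B₁ : ℝ := (((Finset.univ : Finset (Finset (Fin m)))) ×ˢ (Finset.univ : Finset (Fin m))).sup' hFinNe
    (fun Ti => pairing (n Ti.2) (VW Ti.1).2 + ((a:ℝ) - 1) * pairing (n Ti.2) (VW Ti.1).1)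
    with hB₁
  clear_value B₁
  obtain ⟨K₀, hK₀⟩ := exists_nat_ge ((2 * (B₁ + 1)) / ε)
  refine ⟨K₀ + 1, Nat.succ_le_succ (Nat.zero_le _), ?_⟩
  intro k hk
  have hk1 : 1 ≤ k := le_trans (Nat.succ_le_succ (Nat.zero_le _)) hk
  have hkR : (0:ℝ) < (k:ℝ) := by exact_mod_cast hk1
  have hKN : B₁ + 1 ≤ ε / 2 * (K₀ + 1 : ℝ) := by
    have h1 : (2 * (B₁ + 1)) / ε ≤ (K₀ : ℝ) + 1 := by
      have := hK₀; push_cast; linarith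
    have h2 : ε / 2 * ((2 * (B₁ + 1)) / ε) = B₁ + 1 := by field_simp
    calc B₁ + 1 = ε / 2 * ((2 * (B₁ + 1)) / ε) := h2.symm
      _ ≤ ε / 2 * ((K₀ : ℝ) + 1) := by
          apply mul_le_mul_of_nonneg_left h1 (by positivity)
  refine ⟨m, n, fun i => (k:ℤ) * h i, ⟨?_, hgcd, ?_⟩, ?_⟩
  · -- facet presentation of kP
    rw [hPle, smul_halfspaces' n _ hkR]
    ext x
    simp only [mem_setOf_eq, ge_iff_le]
    constructor
    · intro hx i
      have := hx i
      push_cast at this ⊢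
      linarith
    · intro hx i
      have := hx i
      push_cast at this ⊢
      linarith
  · -- irredundancy witnesses
    intro i
    obtain ⟨x, hx1, hx2⟩ := hirr i
    refine ⟨(k:ℝ) • x, ?_, ?_⟩
    · rw [pairing_smul']
      push_cast
      nlinarith
    · intro j hj
      rw [pairing_smul']
      have := hx2 j hj
      push_cast
      nlinarith
  · -- the nearly Gorenstein inclusion
    intro p hp
    obtain ⟨hpx, zz, hzz⟩ := hp.1.2
    have hpc : ∀ i, pairing (n i) p.1 ≥ -(p.2 * (((k:ℤ) * h i : ℤ) : ℝ)) := hp.1.1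
    have hpne : p ≠ 0 := by
      intro h0; exact hp.2 (by rw [h0]; rfl)
    -- positivity of the height
    have hz1 : 1 ≤ zz := by
      by_contra hzle
      push_neg at hzle
      have hzle' : zz ≤ 0 := by omega
      set c' : ℝ := -(zz:ℝ) * k with hc'
      have hc'0 : 0 ≤ c' := by
        apply mul_nonneg _ hkR.le
        simp only [neg_nonneg]
        exact_mod_cast hzle'
      have hrec : ∀ q ∈ P, p.1 + c' • q = 0 := by
        intro q hq
        apply recession_zero' n (fun i => -(h i:ℝ)) hPbounded hPle hq
        intro i
        rw [pairing_add', pairing_smul']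
        have h1 := hpc i
        rw [hzz] at h1
        push_cast at h1
        have h2 : -(h i:ℝ) ≤ pairing (n i) q := by rw [hPle] at hq; exact hq i
        have h3 : c' * (-(h i:ℝ)) ≤ c' * pairing (n i) q :=
          mul_le_mul_of_nonneg_left h2 hc'0
        have h4 : c' * (-(h i:ℝ)) = -(-(zz:ℝ) * k * h i) := by rw [hc']; ring
        nlinarith
      have he0 := hrec p₀ hp₀
      have he1 := hrec p₁ hp₁
      have heq2 : c' • p₀ = c' • p₁ := by
        have := he0.trans he1.symm
        exact add_left_cancel this
      have hc'z : c' = 0 := by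
        by_contra hne
        exact hp01 (smul_right_injective (Fin d → ℝ) hne heq2)
      have hzz0 : (zz:ℝ) = 0 := by
        rw [hc'] at hc'z
        rcases mul_eq_zero.1 hc'z with h5 | h5
        · linarith [neg_eq_zero.1 h5]
        · exact absurd h5 (ne_of_gt hkR)
      have hp1z : p.1 = 0 := by
        have := he0
        rw [hc'z, zero_smul, add_zero] at this
        exact this
      apply hpne
      have hp2z : p.2 = 0 := by rw [hzz, hzz0]
      exact Prod.ext hp1z hp2z
    have hz1R : (1:ℝ) ≤ (zz:ℝ) := by exact_mod_cast hz1
    set N : ℝ := (zz:ℝ) * k with hN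
    clear_value N
    have hNpos : (0:ℝ) < N := by rw [hN]; nlinarith
    have hNne : N ≠ 0 := ne_of_gt hNpos
    have hNK : (K₀ + 1 : ℝ) ≤ N := by
      have h1 : ((K₀:ℝ) + 1) ≤ (k:ℝ) := by exact_mod_cast hk
      rw [hN]; nlinarith
    have hM0 : ∀ i, 0 ≤ pairing (n i) p.1 + N * (h i : ℝ) := by
      intro i
      have h1 := hpc i
      rw [hzz] at h1
      push_cast at h1
      rw [hN]
      nlinarith
    set T : Finset (Fin m) :=
      Finset.univ.filter (fun i => pairing (n i) p.1 + N * (h i : ℝ) ≤ ε/2 * N) with hT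
    clear_value T
    have hpre : ∃ z ∈ P, ∀ i ∈ T, pairing (n i) z + (h i:ℝ) < ε := by
      refine ⟨N⁻¹ • p.1, ?_, ?_⟩
      · rw [hPle]
        intro i
        rw [pairing_smul']
        have h1 : -(N * (h i:ℝ)) ≤ pairing (n i) p.1 := by linarith [hM0 i]
        have h2 := mul_le_mul_of_nonneg_left h1 (inv_nonneg.2 hNpos.le)
        have h3 : N⁻¹ * -(N * (h i:ℝ)) = -(h i:ℝ) := by field_simp
        linarith
      · intro i hi
        rw [pairing_smul']
        have hiT : pairing (n i) p.1 + N * (h i : ℝ) ≤ ε/2 * N := by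
          rw [hT] at hi
          exact (Finset.mem_filter.1 hi).2
        have h4 : N⁻¹ * pairing (n i) p.1 + (h i:ℝ)
            = N⁻¹ * (pairing (n i) p.1 + N * (h i : ℝ)) := by
          field_simp
        rw [h4]
        have h5 : N⁻¹ * (pairing (n i) p.1 + N * (h i : ℝ)) ≤ N⁻¹ * (ε/2 * N) :=
          mul_le_mul_of_nonneg_left hiT (inv_nonneg.2 hNpos.le)
        have h6 : N⁻¹ * (ε/2 * N) = ε/2 := by
          rw [show N⁻¹ * (ε/2 * N) = (N⁻¹ * N) * (ε/2) by ring, inv_mul_cancel₀ hNne, one_mul]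
        linarith
    obtain ⟨c1, c2, c3, c4, c5, c6⟩ := hVW T hpre
    set r1 : Fin d → ℝ := (VW T).2 + ((a:ℝ) - 1) • (VW T).1 with hr1
    have hr1pair : ∀ i, pairing (n i) r1
        = pairing (n i) (VW T).2 + ((a:ℝ)-1) * pairing (n i) (VW T).1 := by
      intro i
      rw [hr1, pairing_add', pairing_smul']
    have hB₁le : ∀ i, pairing (n i) r1 ≤ B₁ := by
      intro i
      rw [hr1pair, hB₁]
      exact Finset.le_sup'
        (f := fun Ti => pairing (n Ti.2) (VW Ti.1).2 + ((a:ℝ) - 1) * pairing (n Ti.2) (VW Ti.1).1)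
        (by simp : (T, i) ∈ ((Finset.univ : Finset (Finset (Fin m)))) ×ˢ (Finset.univ : Finset (Fin m)))
    have hr1lat : r1 ∈ latticePoints d := by
      rw [hr1]
      apply lattice_add' c2
      have hcast : ((a:ℝ) - 1) = (((a:ℤ) - 1 : ℤ) : ℝ) := by push_cast; ring
      rw [hcast]
      exact lattice_zsmul' _ c1
    rw [Set.mem_add]
    refine ⟨(p.1 - r1, p.2), ⟨?_, ?_⟩, (r1, (0:ℝ)), ⟨?_, ?_⟩, ?_⟩
    · -- interior cone membership
      intro i
      show pairing (n i) (p.1 - r1) > -(p.2 * (((k:ℤ) * h i : ℤ) : ℝ))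
      rw [pairing_sub', hzz]
      push_cast
      have hkey : 0 < (pairing (n i) p.1 + N * (h i : ℝ)) - pairing (n i) r1 := by
        by_cases hiT : i ∈ T
        · have h5 := c5 i hiT
          have h6 := c6 i hiT
          have hneg1 : pairing (n i) r1 = -1 := by
            rw [hr1pair, h6, h5]; ring
          rw [hneg1]
          linarith [hM0 i]
        · have hiT' : ε/2 * N < pairing (n i) p.1 + N * (h i : ℝ) := by
            by_contra hcon
            push_neg at hcon
            apply hiT
            rw [hT]
            exact Finset.mem_filter.2 ⟨Finset.mem_univ i, hcon⟩
          have h7 : ε / 2 * (K₀ + 1 : ℝ) ≤ ε / 2 * N :=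
            mul_le_mul_of_nonneg_left hNK (by positivity)
          have h8 := hB₁le i
          linarith
      rw [hN] at hkey
      nlinarith
    · exact ⟨lattice_sub' hpx hr1lat, zz, hzz⟩
    · -- anticone membership
      intro i
      show pairing (n i) r1 ≥ -((0:ℝ) * (((k:ℤ) * h i : ℤ) : ℝ)) - 1
      have h7 : ((a:ℝ)-1) * (-(h i:ℝ)) ≤ ((a:ℝ)-1) * pairing (n i) (VW T).1 :=
        mul_le_mul_of_nonneg_left (c3 i) (by linarith)
      have h8 := c4 i
      rw [hr1pair]
      have h9 : -((0:ℝ) * (((k:ℤ) * h i : ℤ) : ℝ)) - 1 = -1 := by ring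
      rw [h9]
      nlinarith
    · exact ⟨hr1lat, 0, by norm_num⟩
    · have h1 : p.1 - r1 + r1 = p.1 := by abel
      have h2 : p.2 + (0:ℝ) = p.2 := add_zero _
      exact Prod.ext (by simpa using h1) (by simpa using h2)
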